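/- For bounded positive operators A, B on a complex Hilbert space, the geometric mean A # B is the maximum (with respect to the Loewner order) of the set of self-adjoint operators X such that the block operator [[A, X],[X, B]] on H ⊕ H is positive. -/

import Mathlib

open Filter Topology
open scoped NNReal ENNReal
set_option synthInstance.maxHeartbeats 1000000
set_option maxHeartbeats 4000000

variable {H : Type*} [NormedAddCommGroup H] [InnerProductSpace ℂ H] [CompleteSpace H]

/-- The square root of a (positive) bounded operator, via the continuous functional
calculus. -/
noncomputable def opSqrt (A : H →L[ℂ] H) : H →L[ℂ] H := cfc Real.sqrt A

/-- The geometric mean `A # B = A^{1/2}(A^{-1/2} B A^{-1/2})^{1/2} A^{1/2}` of invertible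
positive operators. -/
noncomputable def gmInv (A B : H →L[ℂ] H) : H →L[ℂ] H :=
  opSqrt A * opSqrt (Ring.inverse (opSqrt A) * B * Ring.inverse (opSqrt A)) * opSqrt A

/-- Positivity of the block operator `[[A, X],[X, B]]` on `H ⊕ H`, expressed via its
quadratic form. -/
def BlockPos (A X B : H →L[ℂ] H) : Prop :=
  ∀ ξ η : H,
    0 ≤ ((inner ℂ (A ξ) ξ : ℂ) + (inner ℂ (X η) ξ : ℂ) + (inner ℂ (X ξ) η : ℂ) +
      (inner ℂ (B η) η : ℂ)).re

lemma opSqrt_eq_sqrt (a : H →L[ℂ] H) (ha : 0 ≤ a) : opSqrt a = CFC.sqrt a := by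
  rw [CFC.sqrt_eq_cfc, cfc_nnreal_eq_real _ a ha]
  unfold opSqrt; congr 1; funext x; exact Real.sqrt.eq_1 x


lemma sqrt_isUnit {a : H →L[ℂ] H} (ha : 0 ≤ a) (hu : IsUnit a) : IsUnit (CFC.sqrt a) := by
  have hu' : (0 : NNReal) ∉ spectrum NNReal a := (spectrum.zero_notMem_iff NNReal).mpr hu
  refine (spectrum.zero_notMem_iff NNReal).mp ?_
  rw [CFC.sqrt_eq_cfc, cfc_map_spectrum NNReal.sqrt a]
  rintro ⟨x, hx, hx0⟩
  rw [NNReal.sqrt_eq_zero] at hx0; exact hu' (hx0 ▸ hx)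

lemma sqrt_mono {a b : H →L[ℂ] H} (ha : 0 ≤ a) (hb : 0 ≤ b) (hbu : IsUnit b) (hab : a ≤ b) :
    CFC.sqrt a ≤ CFC.sqrt b := by
  rcases subsingleton_or_nontrivial H with hH | hH
  · exact le_of_eq (Subsingleton.elim _ _)
  have hb0 : (0 : ℝ≥0) ∉ spectrum ℝ≥0 b := (spectrum.zero_notMem_iff ℝ≥0).mpr hbu
  have hsbu : IsUnit (CFC.sqrt b) := sqrt_isUnit hb hbu
  have key : ‖CFC.sqrt a * b ^ (-(1/2) : ℝ)‖ ≤ 1 := (le_iff_norm_sqrt_mul_rpow a b ha (hbu.isStrictlyPositive hb)).mp hab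
  rw [le_iff_norm_sqrt_mul_rpow (CFC.sqrt a) (CFC.sqrt b) (CFC.sqrt_nonneg _) (hsbu.isStrictlyPositive (CFC.sqrt_nonneg _))]
  have hv : (CFC.sqrt b : H →L[ℂ] H) ^ (-(1/2) : ℝ) = b ^ (-(1/4) : ℝ) := by
    rw [CFC.rpow_sqrt b _ hbu hb]; norm_num
  rw [hv]
  set u := CFC.sqrt (CFC.sqrt a) with hu_def
  set v := b ^ (-(1/4) : ℝ) with hv_def
  have huu : u * u = CFC.sqrt a := CFC.sqrt_mul_sqrt_self _ (CFC.sqrt_nonneg _)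
  have hvv : v * v = b ^ (-(1/2) : ℝ) := by rw [← CFC.rpow_add hbu]; norm_num
  have hu_sa : IsSelfAdjoint u := IsSelfAdjoint.of_nonneg (CFC.sqrt_nonneg _)
  have hv_sa : IsSelfAdjoint v := IsSelfAdjoint.of_nonneg CFC.rpow_nonneg
  set w := CFC.sqrt a * b ^ (-(1/2) : ℝ) with hw_def
  set d := v * (CFC.sqrt a * v) with hd_def
  have hd_eq : star (u * v) * (u * v) = d := by
    rw [star_mul, hu_sa.star_eq, hv_sa.star_eq, hd_def, ← huu,
      mul_assoc v u (u * v), ← mul_assoc u u v]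
  have hd_sa : IsSelfAdjoint d := hd_eq ▸ IsSelfAdjoint.star_mul_self (u * v)
  have hspec : spectrum ℂ d \ {0} = spectrum ℂ w \ {0} := by
    rw [hd_def, spectrum.nonzero_mul_comm, hw_def, mul_assoc, hvv]
  have hrad : spectralRadius ℂ d ≤ 1 := by
    rw [spectralRadius]
    refine iSup₂_le fun k hk => ?_
    rcases eq_or_ne k 0 with rfl | hk0
    · simp
    · have hkw : k ∈ spectrum ℂ w := by
        have h1 : k ∈ spectrum ℂ d \ {0} := ⟨hk, hk0⟩
        rw [hspec] at h1; exact h1.1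
      have h2 : ‖k‖ ≤ 1 := (spectrum.norm_le_norm_of_mem hkw).trans key
      simpa using ENNReal.coe_le_one_iff.mpr (by exact_mod_cast h2)
  have hdnorm : ‖d‖ ≤ 1 := by
    rw [hd_sa.spectralRadius_eq_nnnorm] at hrad
    exact_mod_cast ENNReal.coe_le_one_iff.mp hrad
  have h3 : ‖u * v‖ * ‖u * v‖ ≤ 1 := by
    rw [← CStarRing.norm_star_mul_self, hd_eq]; exact hdnorm
  nlinarith [norm_nonneg (u * v)]

lemma le_sqrt_of_sq_le {c m : H →L[ℂ] H} (hc : IsSelfAdjoint c) (hm : 0 ≤ m) (hmu : IsUnit m)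
    (h : c * c ≤ m) : c ≤ CFC.sqrt m := by
  have hcc : (0 : H →L[ℂ] H) ≤ c * c := by
    simpa [hc.star_eq] using star_mul_self_nonneg c
  have hsq : c * c = cfc (fun x : ℝ => x * x) c := by
    rw [cfc_mul _ _ c, cfc_id' ℝ c]
  have h1 : c ≤ CFC.sqrt (c * c) := by
    rw [← opSqrt_eq_sqrt _ hcc, opSqrt, hsq, ← cfc_comp' Real.sqrt (fun x : ℝ => x * x) c]
    conv_lhs => rw [← cfc_id ℝ c]
    refine cfc_mono fun x _ => ?_
    simpa [Real.sqrt_mul_self_eq_abs] using le_abs_self x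
  exact h1.trans (sqrt_mono hcc hm hmu h)

lemma selfadj_inner_comm {T : H →L[ℂ] H} (hT : IsSelfAdjoint T) (x y : H) :
    (inner ℂ (T x) y : ℂ) = inner ℂ x (T y) := by
  conv_lhs => rw [← hT.adjoint_eq]
  rw [ContinuousLinearMap.adjoint_inner_left]

lemma invCase (A B : H →L[ℂ] H) (hA : 0 ≤ A) (hB : 0 ≤ B) (hAu : IsUnit A) (hBu : IsUnit B) :
    IsSelfAdjoint (gmInv A B) ∧ BlockPos A (gmInv A B) B ∧
      ∀ X, IsSelfAdjoint X → BlockPos A X B → X ≤ gmInv A B := by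
  have hB_sa : IsSelfAdjoint B := .of_nonneg hB
  set s := CFC.sqrt A with hs_def
  have hs_nn : 0 ≤ s := CFC.sqrt_nonneg _
  have hs_sa : IsSelfAdjoint s := .of_nonneg hs_nn
  have hss : s * s = A := CFC.sqrt_mul_sqrt_self A hA
  have hsu : IsUnit s := sqrt_isUnit hA hAu
  obtain ⟨u, hu⟩ := hsu
  set S := Ring.inverse s with hS_def
  have hS : S = ↑u⁻¹ := by rw [hS_def, ← hu, Ring.inverse_unit]
  have hsS : s * S = 1 := by rw [hS, ← hu, u.mul_inv]
  have hSs : S * s = 1 := by rw [hS, ← hu, u.inv_mul]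
  have hS_nn : 0 ≤ S := by
    rw [hS]; exact CFC.inv_nonneg_of_nonneg u (hu ▸ hs_nn)
  have hS_sa : IsSelfAdjoint S := .of_nonneg hS_nn
  have hSu : IsUnit S := hS ▸ (u⁻¹).isUnit
  set M := S * B * S with hM_def
  have hM_nn : 0 ≤ M := conjugate_nonneg_of_nonneg hB hS_nn
  have hMu : IsUnit M := (hSu.mul hBu).mul hSu
  set m := CFC.sqrt M with hm_def
  have hm_nn : 0 ≤ m := CFC.sqrt_nonneg _
  have hm_sa : IsSelfAdjoint m := .of_nonneg hm_nn
  have hmm : m * m = M := CFC.sqrt_mul_sqrt_self M hM_nn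
  have hg : gmInv A B = s * m * s := by
    rw [gmInv, opSqrt_eq_sqrt A hA, ← hs_def, ← hS_def, ← hM_def,
      opSqrt_eq_sqrt M hM_nn, ← hm_def]
  have hG_sa : IsSelfAdjoint (s * m * s) := by
    rw [IsSelfAdjoint]
    simp only [star_mul, hs_sa.star_eq, hm_sa.star_eq, mul_assoc]
  have hsMs : s * M * s = B := by
    rw [hM_def]
    calc s * (S * B * S) * s = (s * S) * B * (S * s) := by noncomm_ring
    _ = B := by rw [hsS, hSs, one_mul, mul_one]
  have hbp : BlockPos A (s * m * s) B := by
    intro ξ η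
    have e1 : (inner ℂ (A ξ) ξ : ℂ) = inner ℂ (s ξ) (s ξ) := by
      conv_lhs => rw [← hss]
      rw [ContinuousLinearMap.mul_apply, selfadj_inner_comm hs_sa]
    have hGapp : ∀ z, (s * m * s) z = s ((m * s) z) := fun z => by
      simp [ContinuousLinearMap.mul_apply]
    have e2 : (inner ℂ ((s * m * s) η) ξ : ℂ) = inner ℂ ((m * s) η) (s ξ) := by
      rw [hGapp, selfadj_inner_comm hs_sa]
    have e3 : (inner ℂ ((s * m * s) ξ) η : ℂ) = inner ℂ (s ξ) ((m * s) η) := by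
      rw [selfadj_inner_comm hG_sa, hGapp, ← selfadj_inner_comm hs_sa]
    have e4 : (inner ℂ (B η) η : ℂ) = inner ℂ ((m * s) η) ((m * s) η) := by
      have hB' : star (m * s) * (m * s) = B := by
        rw [star_mul, hm_sa.star_eq, hs_sa.star_eq, ← hsMs, ← hmm]
        noncomm_ring
      conv_lhs => rw [← hB']
      rw [ContinuousLinearMap.mul_apply, ContinuousLinearMap.star_eq_adjoint,
        ContinuousLinearMap.adjoint_inner_left]
    rw [e1, e2, e3, e4]
    have : (inner ℂ (s ξ) (s ξ) : ℂ) + (inner ℂ ((m * s) η) (s ξ) : ℂ) +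
        (inner ℂ (s ξ) ((m * s) η) : ℂ) + (inner ℂ ((m * s) η) ((m * s) η) : ℂ) =
        (inner ℂ (s ξ + (m * s) η) (s ξ + (m * s) η) : ℂ) := by
      rw [inner_add_add_self]; ring
    rw [this]
    exact inner_self_nonneg (𝕜 := ℂ) (x := s ξ + (m * s) η)
  refine ⟨hg ▸ hG_sa, hg ▸ hbp, ?_⟩
  intro X hX_sa hXbp
  set C₀ := S * (S * X) with hC0_def
  have hAC : A * C₀ = X := by
    rw [hC0_def, ← hss]
    calc s * s * (S * (S * X)) = s * ((s * S) * (S * X)) := by noncomm_ring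
    _ = s * (S * X) := by rw [hsS, one_mul]
    _ = (s * S) * X := by noncomm_ring
    _ = X := by rw [hsS, one_mul]
  set D := B - X * C₀ with hD_def
  have hXC_sa : IsSelfAdjoint (X * C₀) := by
    rw [IsSelfAdjoint, hC0_def]
    simp only [star_mul, hX_sa.star_eq, hS_sa.star_eq, mul_assoc]
  have hD_sa : IsSelfAdjoint D := hB_sa.sub hXC_sa
  have hD_nn : (0 : H →L[ℂ] H) ≤ D := by
    rw [ContinuousLinearMap.nonneg_iff_isPositive]
    refine ⟨hD_sa.isSymmetric, fun η => ?_⟩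
    have key := hXbp (-(C₀ η)) η
    have c1 : (inner ℂ (A (-(C₀ η))) (-(C₀ η)) : ℂ) = inner ℂ (X η) (C₀ η) := by
      rw [map_neg, inner_neg_neg]
      congr 1
      rw [← ContinuousLinearMap.mul_apply, hAC]
    have c2 : (inner ℂ (X η) (-(C₀ η)) : ℂ) = -inner ℂ (X η) (C₀ η) := by
      rw [inner_neg_right]
    have c3 : (inner ℂ (X (-(C₀ η))) η : ℂ) = -inner ℂ ((X * C₀) η) η := by
      simp [ContinuousLinearMap.mul_apply, inner_neg_left]
    rw [c1, c2, c3] at key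
    have : (inner ℂ (X η) (C₀ η) : ℂ) + -inner ℂ (X η) (C₀ η) + -inner ℂ ((X * C₀) η) η +
        inner ℂ (B η) η = inner ℂ (D η) η := by
      rw [hD_def]
      simp [inner_sub_left]
      ring
    rw [this] at key
    exact key
  set c := S * (X * S) with hc_def
  have hc_sa : IsSelfAdjoint c := by
    rw [IsSelfAdjoint, hc_def]
    simp only [star_mul, hX_sa.star_eq, hS_sa.star_eq, mul_assoc]
  have hcc : c * c ≤ M := by
    have hSDS : S * D * S = M - c * c := by
      rw [hD_def, hc_def, hM_def]
      noncomm_ring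
    have : (0 : H →L[ℂ] H) ≤ M - c * c := hSDS ▸ conjugate_nonneg_of_nonneg hD_nn hS_nn
    exact sub_nonneg.mp this
  have hcm : c ≤ m := le_sqrt_of_sq_le hc_sa hM_nn hMu hcc
  have final : s * c * s ≤ s * m * s := conjugate_le_conjugate_of_nonneg hcm hs_nn
  have hscs : s * c * s = X := by
    rw [hc_def]
    calc s * (S * (X * S)) * s = (s * S) * X * (S * s) := by noncomm_ring
    _ = X := by rw [hsS, hSs, one_mul, mul_one]
  rw [hg]
  exact hscs ▸ final

/-- the geometric mean `A # B` of bounded positive operators (defined as the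
strong limit of `(A+εI) # (B+εI)` with the invertible-case formula) is the maximum, in the
Loewner order, of the set of self-adjoint `X` with `[[A, X],[X, B]]` positive. -/
theorem geom_mean_is_greatest (A B G : H →L[ℂ] H)
    (hA : A.IsPositive) (hB : B.IsPositive)
    (hG : ∀ ξ : H, Tendsto (fun ε : ℝ => gmInv (A + ε • 1) (B + ε • 1) ξ)
      (𝓝[>] (0 : ℝ)) (𝓝 (G ξ))) :
    (IsSelfAdjoint G ∧ BlockPos A G B) ∧
      ∀ X : H →L[ℂ] H, IsSelfAdjoint X → BlockPos A X B → (G - X).IsPositive := by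
  have hA0 : (0 : H →L[ℂ] H) ≤ A := (ContinuousLinearMap.nonneg_iff_isPositive A).mpr hA
  have hB0 : (0 : H →L[ℂ] H) ≤ B := (ContinuousLinearMap.nonneg_iff_isPositive B).mpr hB
  set Gf : ℝ → H →L[ℂ] H := fun ε => gmInv (A + ε • 1) (B + ε • 1) with hGf_def
  have hshiftpos : ∀ (T : H →L[ℂ] H), 0 ≤ T → ∀ ε : ℝ, 0 < ε →
      0 ≤ T + ε • 1 ∧ IsUnit (T + ε • 1) := by
    intro T hT ε hε
    have h1 : (0 : H →L[ℂ] H) ≤ ε • 1 := smul_nonneg hε.le zero_le_one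
    have h2 : IsUnit ((ε : ℝ) • (1 : H →L[ℂ] H)) := by
      have : (ε : ℝ) • (1 : H →L[ℂ] H) = algebraMap ℝ _ ε := (Algebra.algebraMap_eq_smul_one ε).symm
      rw [this]
      exact (isUnit_iff_ne_zero.mpr hε.ne').map (algebraMap ℝ (H →L[ℂ] H))
    refine ⟨add_nonneg hT h1, ?_⟩
    have h3 : ε • (1 : H →L[ℂ] H) ≤ T + ε • 1 := le_add_of_nonneg_left hT
    exact CStarAlgebra.isUnit_of_le _ h3 (h2.isStrictlyPositive h1)
  have hinv : ∀ ε : ℝ, 0 < ε →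
      IsSelfAdjoint (Gf ε) ∧ BlockPos (A + ε • 1) (Gf ε) (B + ε • 1) ∧
        ∀ X, IsSelfAdjoint X → BlockPos (A + ε • 1) X (B + ε • 1) → X ≤ Gf ε := by
    intro ε hε
    obtain ⟨hAe, hAu⟩ := hshiftpos A hA0 ε hε
    obtain ⟨hBe, hBu⟩ := hshiftpos B hB0 ε hε
    exact invCase _ _ hAe hBe hAu hBu
  have hev : ∀ᶠ ε in 𝓝[>] (0:ℝ), 0 < ε := eventually_mem_nhdsWithin
  have hGsa : IsSelfAdjoint G := by
    rw [ContinuousLinearMap.isSelfAdjoint_iff_isSymmetric]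
    intro x y
    have t1 : Tendsto (fun ε => (inner ℂ (Gf ε x) y : ℂ)) (𝓝[>] (0:ℝ))
        (𝓝 (inner ℂ (G x) y)) := (hG x).inner tendsto_const_nhds
    have t2 : Tendsto (fun ε => (inner ℂ x (Gf ε y) : ℂ)) (𝓝[>] (0:ℝ))
        (𝓝 (inner ℂ x (G y))) := tendsto_const_nhds.inner (hG y)
    have heq : ∀ᶠ ε in 𝓝[>] (0:ℝ),
        (inner ℂ (Gf ε x) y : ℂ) = inner ℂ x (Gf ε y) := by
      filter_upwards [hev] with ε hε
      exact selfadj_inner_comm (hinv ε hε).1 x y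
    exact tendsto_nhds_unique (t1.congr' heq) t2
  have tendA : ∀ ξ : H, Tendsto (fun ε : ℝ => (A + ε • 1) ξ) (𝓝[>] (0:ℝ)) (𝓝 (A ξ)) := by
    intro ξ
    have h0 : Tendsto (fun ε : ℝ => ε) (𝓝[>] (0:ℝ)) (𝓝 0) :=
      tendsto_id.mono_left nhdsWithin_le_nhds
    have : Tendsto (fun ε : ℝ => A ξ + ε • ξ) (𝓝[>] (0:ℝ)) (𝓝 (A ξ + (0:ℝ) • ξ)) :=
      tendsto_const_nhds.add (h0.smul_const ξ)
    simpa using this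
  have tendB : ∀ η : H, Tendsto (fun ε : ℝ => (B + ε • 1) η) (𝓝[>] (0:ℝ)) (𝓝 (B η)) := by
    intro η
    have h0 : Tendsto (fun ε : ℝ => ε) (𝓝[>] (0:ℝ)) (𝓝 0) :=
      tendsto_id.mono_left nhdsWithin_le_nhds
    have : Tendsto (fun ε : ℝ => B η + ε • η) (𝓝[>] (0:ℝ)) (𝓝 (B η + (0:ℝ) • η)) :=
      tendsto_const_nhds.add (h0.smul_const η)
    simpa using this
  have hGbp : BlockPos A G B := by
    intro ξ η
    have tsum : Tendsto (fun ε : ℝ =>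
        ((inner ℂ ((A + ε • 1) ξ) ξ : ℂ) + (inner ℂ (Gf ε η) ξ : ℂ) + (inner ℂ (Gf ε ξ) η : ℂ) +
          (inner ℂ ((B + ε • 1) η) η : ℂ)).re) (𝓝[>] (0:ℝ))
        (𝓝 (((inner ℂ (A ξ) ξ : ℂ) + (inner ℂ (G η) ξ : ℂ) + (inner ℂ (G ξ) η : ℂ) +
          (inner ℂ (B η) η : ℂ)).re)) := by
      refine (Complex.continuous_re.tendsto _).comp ?_
      exact ((((tendA ξ).inner tendsto_const_nhds).add
        ((hG η).inner tendsto_const_nhds)).add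
        ((hG ξ).inner tendsto_const_nhds)).add ((tendB η).inner tendsto_const_nhds)
    refine ge_of_tendsto tsum ?_
    filter_upwards [hev] with ε hε
    exact (hinv ε hε).2.1 ξ η
  refine ⟨⟨hGsa, hGbp⟩, ?_⟩
  intro X hXsa hXbp
  have hXshift : ∀ ε : ℝ, 0 < ε → BlockPos (A + ε • 1) X (B + ε • 1) := by
    intro ε hε ξ η
    have esm : ∀ (r : ℝ) (z w : H), (inner ℂ (r • z) w : ℂ) = (r : ℂ) * inner ℂ z w := by
      intro r z w
      rw [← algebraMap_smul ℂ r z, Complex.coe_algebraMap, inner_smul_left, Complex.conj_ofReal]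
    have base := hXbp ξ η
    have e1 : (inner ℂ ((A + ε • 1) ξ) ξ : ℂ) = (inner ℂ (A ξ) ξ : ℂ) + (ε : ℂ) * (inner ℂ ξ ξ : ℂ) := by
      simp [ContinuousLinearMap.add_apply, ContinuousLinearMap.smul_apply,
        ContinuousLinearMap.one_apply, inner_add_left, esm]
    have e2 : (inner ℂ ((B + ε • 1) η) η : ℂ) = (inner ℂ (B η) η : ℂ) + (ε : ℂ) * (inner ℂ η η : ℂ) := by
      simp [ContinuousLinearMap.add_apply, ContinuousLinearMap.smul_apply,
        ContinuousLinearMap.one_apply, inner_add_left, esm]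
    rw [e1, e2]
    have hξ : 0 ≤ ((inner ℂ ξ ξ : ℂ)).re := inner_self_nonneg (𝕜 := ℂ) (x := ξ)
    have hη : 0 ≤ ((inner ℂ η η : ℂ)).re := inner_self_nonneg (𝕜 := ℂ) (x := η)
    have expand : ((inner ℂ (A ξ) ξ : ℂ) + (ε : ℂ) * (inner ℂ ξ ξ : ℂ) + (inner ℂ (X η) ξ : ℂ) +
        (inner ℂ (X ξ) η : ℂ) + ((inner ℂ (B η) η : ℂ) + (ε : ℂ) * (inner ℂ η η : ℂ))).re =
        ((inner ℂ (A ξ) ξ : ℂ) + (inner ℂ (X η) ξ : ℂ) + (inner ℂ (X ξ) η : ℂ) +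
        (inner ℂ (B η) η : ℂ)).re + ε * ((inner ℂ ξ ξ : ℂ)).re + ε * ((inner ℂ η η : ℂ)).re := by
      simp [Complex.add_re, Complex.mul_re, Complex.ofReal_re, Complex.ofReal_im]
      ring
    rw [expand]
    have : 0 ≤ ε * ((inner ℂ ξ ξ : ℂ)).re := mul_nonneg hε.le hξ
    have : 0 ≤ ε * ((inner ℂ η η : ℂ)).re := mul_nonneg hε.le hη
    linarith
  have hform : ∀ η : H, 0 ≤ ((inner ℂ ((G - X) η) η : ℂ)).re := by
    intro η
    have tsum : Tendsto (fun ε : ℝ => ((inner ℂ ((Gf ε - X) η) η : ℂ)).re) (𝓝[>] (0:ℝ))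
        (𝓝 (((inner ℂ ((G - X) η) η : ℂ)).re)) := by
      refine (Complex.continuous_re.tendsto _).comp ?_
      have : Tendsto (fun ε : ℝ => (Gf ε - X) η) (𝓝[>] (0:ℝ)) (𝓝 ((G - X) η)) := by
        simp only [ContinuousLinearMap.sub_apply]
        exact (hG η).sub tendsto_const_nhds
      exact this.inner tendsto_const_nhds
    refine ge_of_tendsto tsum ?_
    filter_upwards [hev] with ε hε
    have hle : X ≤ Gf ε := (hinv ε hε).2.2 X hXsa (hXshift ε hε)
    have := (ContinuousLinearMap.le_def X (Gf ε)).mp hle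
    have h2 := this.2 η
    simpa [ContinuousLinearMap.reApplyInnerSelf, inner_sub_left] using h2
  refine ⟨(hGsa.sub hXsa).isSymmetric, fun η => ?_⟩
  have := hform η
  simpa [ContinuousLinearMap.reApplyInnerSelf, inner_sub_left] using this
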